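/- The backward Mehler kernel satisfies the exact matrix Harnack identity: for t < 0, ∇_i ∇_j M - (∇_i M ∇_j M)/M + (e^{2t}/(1 - e^{2t})) M δ_{ij} = 0 for all indices i, j. -/

import Mathlib

open Real

noncomputable def backwardMehler (n : ℕ) (x : EuclideanSpace ℝ (Fin n)) (t : ℝ) : ℝ :=
  (1 - Real.exp (2 * t)) ^ (-(n : ℝ) / 2) *
    Real.exp (-(1 / 2) * (Real.exp (2 * t) * ‖x‖ ^ 2) / (1 - Real.exp (2 * t)))

/-- i-th partial derivative -/
noncomputable def pd {n : ℕ} (i : Fin n) (f : EuclideanSpace ℝ (Fin n) → ℝ)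
    (x : EuclideanSpace ℝ (Fin n)) : ℝ :=
  fderiv ℝ f x (EuclideanSpace.single i 1)

noncomputable def mA (t : ℝ) : ℝ := -(1 / 2) * Real.exp (2 * t) / (1 - Real.exp (2 * t))

lemma mehler_eq (n : ℕ) (x : EuclideanSpace ℝ (Fin n)) (t : ℝ) :
    backwardMehler n x t =
      (1 - Real.exp (2 * t)) ^ (-(n : ℝ) / 2) * Real.exp (mA t * ‖x‖ ^ 2) := by
  unfold backwardMehler mA
  ring_nf

lemma hasFDerivAt_mehler (n : ℕ) (t : ℝ) (x : EuclideanSpace ℝ (Fin n)) :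
    HasFDerivAt (fun y => backwardMehler n y t)
      ((2 * mA t * backwardMehler n x t) • (innerSL ℝ x)) x := by
  have h1 : HasFDerivAt (fun y : EuclideanSpace ℝ (Fin n) => mA t * ‖y‖ ^ 2)
      (mA t • (2 • (innerSL ℝ x))) x :=
    ((hasFDerivAt_id x).norm_sq).const_mul (mA t)
  have h2 := h1.exp
  have h3 := h2.const_mul ((1 - Real.exp (2 * t)) ^ (-(n : ℝ) / 2))
  have hfun : (fun y => backwardMehler n y t) =
      fun y => (1 - Real.exp (2 * t)) ^ (-(n : ℝ) / 2) * Real.exp (mA t * ‖y‖ ^ 2) := by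
    funext y; exact mehler_eq n y t
  rw [hfun, mehler_eq n x t]
  refine HasFDerivAt.congr_fderiv h3 ?_
  ext v
  simp only [ContinuousLinearMap.smul_apply, ContinuousLinearMap.comp_id]
  simp [two_smul]
  ring

lemma pd_mehler (n : ℕ) (t : ℝ) (x : EuclideanSpace ℝ (Fin n)) (j : Fin n) :
    pd j (fun y => backwardMehler n y t) x = 2 * mA t * x j * backwardMehler n x t := by
  rw [pd, (hasFDerivAt_mehler n t x).fderiv]
  simp [EuclideanSpace.inner_single_right, real_inner_comm]
  ring

theorem backward_mehler_matrix_harnack (n : ℕ) (t : ℝ) (ht : t < 0)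
    (x : EuclideanSpace ℝ (Fin n)) (i j : Fin n) :
    pd i (pd j (fun y => backwardMehler n y t)) x
      - pd i (fun y => backwardMehler n y t) x * pd j (fun y => backwardMehler n y t) x
          / backwardMehler n x t
      + Real.exp (2 * t) / (1 - Real.exp (2 * t)) * backwardMehler n x t *
          (if i = j then 1 else 0) = 0 := by
  have hlt : Real.exp (2 * t) < 1 := by
    rw [← Real.exp_zero]
    exact Real.exp_lt_exp.mpr (by linarith)
  have hpos : (0 : ℝ) < 1 - Real.exp (2 * t) := by linarith
  have hMpos : 0 < backwardMehler n x t := by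
    unfold backwardMehler
    exact mul_pos (Real.rpow_pos_of_pos hpos _) (Real.exp_pos _)
  -- second derivative
  have hfun : pd j (fun y => backwardMehler n y t) =
      fun y => 2 * mA t * y j * backwardMehler n y t := by
    funext y; exact pd_mehler n t y j
  have hproj : HasFDerivAt (fun y : EuclideanSpace ℝ (Fin n) => 2 * mA t * y j)
      ((2 * mA t) • (EuclideanSpace.proj j : EuclideanSpace ℝ (Fin n) →L[ℝ] ℝ)) x :=
    by exact ((EuclideanSpace.proj (𝕜 := ℝ) j).hasFDerivAt (x := x)).const_mul (2 * mA t)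
  have hprod := hproj.mul (hasFDerivAt_mehler n t x)
  have hpd2 : pd i (pd j (fun y => backwardMehler n y t)) x =
      2 * mA t * (if j = i then (1:ℝ) else 0) * backwardMehler n x t
        + 2 * mA t * x j * (2 * mA t * x i * backwardMehler n x t) := by
    rw [pd, hfun, (show HasFDerivAt (fun y => 2 * mA t * y j * backwardMehler n y t) _ x from hprod).fderiv]
    simp [EuclideanSpace.inner_single_right, real_inner_comm,
      EuclideanSpace.single_apply]
    ring
  rw [hpd2, pd_mehler, pd_mehler]
  have h2a : 2 * mA t = -(Real.exp (2 * t) / (1 - Real.exp (2 * t))) := by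
    unfold mA
    field_simp
  have hswap : (if j = i then (1:ℝ) else 0) = (if i = j then (1:ℝ) else 0) := by
    by_cases h : i = j <;> simp [h, eq_comm]
  rw [hswap, h2a]
  by_cases h : i = j <;> simp only [h, if_true, if_false] <;> field_simp <;> ring
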